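/- Let G be a group and let A and B be normal subgroups of G. Suppose A is the normal closure in G of a set {a_i : i ∈ I} and B is the subgroup of G generated by a set {b_j : j ∈ J}. Then the commutator subgroup [A,B] equals the normal closure in G of the set {[a_i, b_j] : i ∈ I, j ∈ J}. -/

import Mathlib

open scoped commutatorElement

/-- Let `G` be a group, `A` and `B` normal subgroups of `G`. If `A` is the normal closure of
a family `{a_i : i ∈ I}` and `B` is generated by a family `{b_j : j ∈ J}`, then the commutator
subgroup `[A,B]` is the normal closure in `G` of the family `{[a_i, b_j] : i ∈ I, j ∈ J}`. -/
theorem centralizer_normal_of_normal {G : Type*} [Group G] (H : Subgroup G) [hH : H.Normal] :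
    (Subgroup.centralizer (H : Set G)).Normal := by
  constructor
  intro g hg n
  rw [Subgroup.mem_centralizer_iff] at hg ⊢
  intro h hh
  have h1 : n⁻¹ * h * n ∈ H := by
    simpa using hH.conj_mem h hh n⁻¹
  have h2 := hg _ h1
  have : h * (n * g * n⁻¹) = n * ((n⁻¹ * h * n) * g) * n⁻¹ := by group
  rw [this, h2]
  group

theorem commutator_eq_normalClosure_commutators
    {G : Type*} [Group G] (A B : Subgroup G) [A.Normal] [B.Normal]
    {I J : Type*} (a : I → G) (b : J → G)
    (hA : A = Subgroup.normalClosure (Set.range a))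
    (hB : B = Subgroup.closure (Set.range b)) :
    ⁅A, B⁆ = Subgroup.normalClosure {x : G | ∃ (i : I) (j : J), x = ⁅a i, b j⁆} := by
  set S : Set G := {x : G | ∃ (i : I) (j : J), x = ⁅a i, b j⁆} with hS
  set N := Subgroup.normalClosure S with hN
  haveI : N.Normal := Subgroup.normalClosure_normal
  apply le_antisymm
  · -- ⁅A,B⁆ ≤ N : work in the quotient G/N
    rw [Subgroup.commutator_le]
    intro x hx y hy
    let f := QuotientGroup.mk' N
    have hfsurj : Function.Surjective f := QuotientGroup.mk'_surjective N
    -- image of B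
    set Bb : Subgroup (G ⧸ N) := B.map f with hBb
    haveI : Bb.Normal := Subgroup.Normal.map ‹B.Normal› f hfsurj
    -- each f (a i) centralizes Bb
    have hcomm : ∀ i : I, f (a i) ∈ Subgroup.centralizer (Bb : Set (G ⧸ N)) := by
      intro i
      have hle : Bb ≤ Subgroup.centralizer {f (a i)} := by
        rw [hBb, hB, MonoidHom.map_closure, Subgroup.closure_le]
        rintro _ ⟨_, ⟨j, rfl⟩, rfl⟩
        rw [SetLike.mem_coe, Subgroup.mem_centralizer_singleton_iff]
        have : f ⁅a i, b j⁆ = 1 := by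
          rw [← MonoidHom.mem_ker, QuotientGroup.ker_mk']
          exact Subgroup.subset_normalClosure ⟨i, j, rfl⟩
        rw [map_commutatorElement] at this
        have := commutatorElement_eq_one_iff_commute.mp this
        exact this.eq.symm
      rw [Subgroup.mem_centralizer_iff]
      intro h hh
      exact Subgroup.mem_centralizer_singleton_iff.mp (hle hh)
    -- centralizer of Bb is normal
    haveI : (Subgroup.centralizer (Bb : Set (G ⧸ N))).Normal :=
      centralizer_normal_of_normal Bb
    -- image of A lies in the centralizer
    have hAle : A.map f ≤ Subgroup.centralizer (Bb : Set (G ⧸ N)) := by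
      rw [hA, Subgroup.map_normalClosure _ _ hfsurj]
      apply Subgroup.normalClosure_le_normal
      rintro _ ⟨_, ⟨i, rfl⟩, rfl⟩
      exact hcomm i
    -- conclude
    have hfx : f x ∈ Subgroup.centralizer (Bb : Set (G ⧸ N)) :=
      hAle ⟨x, hx, rfl⟩
    have hfy : f y ∈ Bb := ⟨y, hy, rfl⟩
    have : f ⁅x, y⁆ = 1 := by
      rw [map_commutatorElement]
      exact commutatorElement_eq_one_iff_commute.mpr
        (((Subgroup.mem_centralizer_iff.mp hfx) (f y) hfy).symm)
    rw [← QuotientGroup.ker_mk' N, MonoidHom.mem_ker]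
    exact this
  · -- N ≤ ⁅A,B⁆
    haveI : (⁅A, B⁆ : Subgroup G).Normal := Subgroup.commutator_normal A B
    apply Subgroup.normalClosure_le_normal
    rintro _ ⟨i, j, rfl⟩
    exact Subgroup.commutator_mem_commutator
      (hA ▸ Subgroup.subset_normalClosure ⟨i, rfl⟩)
      (hB ▸ Subgroup.subset_closure ⟨j, rfl⟩)
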